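/- Let C be a cubical category and f a morphism of rank k. Then f has exactly k distinct first factors and k distinct last factors; concretely, in the poset category of a simplicial fan, for σ ⊆ τ with dim τ − dim σ = k and τ = cone{σ, v₁,…,v_k}, the first factors of f_{στ} are the k morphisms σ → cone{σ, v_i}, and σ equals the intersection of the k codimension-1 faces λ_i = cone{σ, v₁,…,v̂_i,…,v_k} of τ containing σ, i.e. σ = ⋂_{i=1}^{k} λ_i. -/

import Mathlib

/-- In the poset category of a simplicial fan, a morphism `σ → τ` of rank
`k` (where `τ = cone{σ, v₁,…,v_k}` with `w ∘ Sum.inl` the generators of `σ` and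
`v_i = w (Sum.inr i)`) has `k` distinct first factors `σ → cone{σ, v_i}`, and `σ` is
recovered from the `k` last factors as the intersection of the codimension-1 faces
`λ_i = cone{σ, v₁,…,v̂_i,…,v_k}`: `σ = ⋂_{i=1}^k λ_i`. -/
theorem stmt18 {n k : ℕ} {ι : Type} [Fintype ι] (hk : 0 < k)
    (w : ι ⊕ Fin k → EuclideanSpace ℝ (Fin n))
    (hindep : LinearIndependent ℝ w) :
    (∀ i j : Fin k,
      Submodule.span {c : ℝ // 0 ≤ c}
          (Set.range (w ∘ Sum.inl) ∪ {w (Sum.inr i)}) =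
        Submodule.span {c : ℝ // 0 ≤ c}
          (Set.range (w ∘ Sum.inl) ∪ {w (Sum.inr j)}) → i = j) ∧
    (⨅ i : Fin k, Submodule.span {c : ℝ // 0 ≤ c}
        (Set.range w \ {w (Sum.inr i)})) =
      Submodule.span {c : ℝ // 0 ≤ c} (Set.range (w ∘ Sum.inl)) := by
  set R := {c : ℝ // 0 ≤ c}
  have hw : Function.Injective w := hindep.injective
  -- coercion lemma
  have lcR : ∀ c : (ι ⊕ Fin k) →₀ R,
      Finsupp.linearCombination ℝ w (c.mapRange Subtype.val rfl)
        = Finsupp.linearCombination R w c := by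
    intro c
    simp only [Finsupp.linearCombination_apply]
    rw [Finsupp.sum_mapRange_index (by simp)]
    rfl
  have hinj : Function.Injective (Finsupp.linearCombination ℝ w) := hindep
  -- set rewrites
  have hset1 : ∀ i : Fin k, Set.range (w ∘ Sum.inl) ∪ {w (Sum.inr i)}
      = w '' (Set.range Sum.inl ∪ {Sum.inr i}) := by
    intro i
    rw [Set.image_union, Set.image_singleton, ← Set.range_comp]
  have hset2 : ∀ i : Fin k, Set.range w \ {w (Sum.inr i)}
      = w '' ({Sum.inr i}ᶜ : Set (ι ⊕ Fin k)) := by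
    intro i
    rw [← Set.image_singleton, ← Set.image_univ, ← Set.image_diff hw,
      Set.compl_eq_univ_diff]
  have hset3 : Set.range (w ∘ Sum.inl) = w '' Set.range Sum.inl := by
    rw [← Set.range_comp]
  constructor
  · intro i j h
    have hj : w (Sum.inr j) ∈ Submodule.span R
        (Set.range (w ∘ Sum.inl) ∪ {w (Sum.inr i)}) := by
      rw [h]
      exact Submodule.subset_span (Set.mem_union_right _ rfl)
    rw [hset1 i, Finsupp.mem_span_image_iff_linearCombination] at hj
    obtain ⟨l, hl, hlx⟩ := hj
    have : l.mapRange Subtype.val rfl = Finsupp.single (Sum.inr j) (1 : ℝ) := by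
      apply hinj
      rw [lcR, hlx]
      simp
    have hjsupp : Sum.inr j ∈ l.support := by
      rw [Finsupp.mem_support_iff]
      intro h0
      have := DFunLike.congr_fun this (Sum.inr j)
      simp [h0] at this
    have := hl hjsupp
    rcases this with h1 | h2
    · obtain ⟨a, ha⟩ := h1; exact absurd ha (by simp)
    · simpa using h2.symm
  · apply le_antisymm
    · intro x hx
      simp only [Submodule.mem_iInf] at hx
      have h0 := hx ⟨0, hk⟩
      rw [hset2, Finsupp.mem_span_image_iff_linearCombination] at h0
      obtain ⟨c, hc, hcx⟩ := h0
      -- all inr coordinates of c vanish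
      have hzero : ∀ i : Fin k, c (Sum.inr i) = 0 := by
        intro i
        have hi := hx i
        rw [hset2, Finsupp.mem_span_image_iff_linearCombination] at hi
        obtain ⟨d, hd, hdx⟩ := hi
        have : c.mapRange Subtype.val rfl = d.mapRange Subtype.val rfl := by
          apply hinj; rw [lcR, lcR, hcx, hdx]
        have hdi : d (Sum.inr i) = 0 := by
          by_contra h0
          exact (hd (Finsupp.mem_support_iff.mpr h0)) rfl
        have := DFunLike.congr_fun this (Sum.inr i)
        simp only [Finsupp.mapRange_apply, hdi] at this
        exact Subtype.ext this
      rw [hset3, Finsupp.mem_span_image_iff_linearCombination]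
      refine ⟨c, ?_, hcx⟩
      intro s hs
      rcases s with a | i
      · exact ⟨a, rfl⟩
      · exact absurd (hzero i) (Finsupp.mem_support_iff.mp hs)
    · refine le_iInf fun i => Submodule.span_mono ?_
      rintro x ⟨a, rfl⟩
      refine ⟨⟨Sum.inl a, rfl⟩, ?_⟩
      simp only [Set.mem_singleton_iff]
      intro h
      exact absurd (hw h) (by simp)
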